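/- Every input drawn from the distribution D_N is 1/4-far from satisfying the balancing formula of height h (i.e., one must change more than a 1/4 fraction of the 2^h input variables to make the root evaluate to a value other than F). -/

import Mathlib

/-- The 4-letter alphabet `Σ = {0, 1, P, F}` of the balancing formula. -/
inductive Sig4 where
  | zero | one | P | F
deriving DecidableEq

/-- The balancing gate. -/
def bgate : Sig4 → Sig4 → Sig4
  | .zero, .zero => .zero
  | .one, .one => .one
  | .one, .zero => .P
  | .zero, .one => .P
  | .P, .P => .P
  | _, _ => .F

/-- The value computed at the root of the balancing formula of height `h`
on the Boolean input `a` (read at positions `0, …, 2^h - 1`). -/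
def balEval : ℕ → (ℕ → Bool) → Sig4
  | 0, a => if a 0 then .one else .zero
  | h + 1, a => bgate (balEval h a) (balEval h (fun i => a (i + 2 ^ h)))

/-- The number of `1`-values among the first `m` positions of `a`. -/
def ones (m : ℕ) (a : ℕ → Bool) : ℕ :=
  ((Finset.range m).filter (fun j => a j = true)).card

/-! ### Auxiliary counting machinery -/

/-- Count positions below `m` satisfying a decidable predicate. -/
def cnt (m : ℕ) (p : ℕ → Prop) [DecidablePred p] : ℕ :=
  ((Finset.range m).filter p).card

lemma cnt_congr {m : ℕ} {p q : ℕ → Prop} [DecidablePred p] [DecidablePred q]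
    (h : ∀ n < m, (p n ↔ q n)) : cnt m p = cnt m q := by
  unfold cnt
  congr 1
  apply Finset.filter_congr
  intro x hx
  exact h x (Finset.mem_range.mp hx)

lemma cnt_succ (m : ℕ) (p : ℕ → Prop) [DecidablePred p] :
    cnt (m + 1) p = cnt m p + (if p m then 1 else 0) := by
  unfold cnt
  rw [Finset.range_add_one, Finset.filter_insert]
  by_cases hp : p m
  · simp [hp, Finset.card_insert_of_notMem Finset.notMem_range_self]
  · simp [hp]

lemma cnt_add (m n : ℕ) (p : ℕ → Prop) [DecidablePred p] :
    cnt (m + n) p = cnt m p + cnt n (fun j => p (j + m)) := by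
  induction n with
  | zero => simp [cnt]
  | succ n ih =>
      have e : m + n = n + m := Nat.add_comm m n
      rw [← Nat.add_assoc, cnt_succ, ih, cnt_succ, e, Nat.add_assoc]

lemma cnt_mul (B s : ℕ) (p : ℕ → Prop) [DecidablePred p] :
    cnt (B * s) p = ∑ i ∈ Finset.range B, cnt s (fun r => p (i * s + r)) := by
  induction B with
  | zero => simp [cnt]
  | succ B ih =>
      rw [Nat.succ_mul, cnt_add, ih, Finset.sum_range_succ]
      congr 1
      apply cnt_congr
      intro n _
      rw [Nat.add_comm]

lemma cnt_const (m : ℕ) (P : Prop) [Decidable P] :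
    cnt m (fun _ => P) = if P then m else 0 := by
  by_cases hP : P <;> simp [cnt, hP]

/-- Lower bound: number of `1`s changes by at most the Hamming distance. -/
lemma cnt_true_le (N : ℕ) (u v : ℕ → Bool) :
    cnt N (fun n => u n = true) ≤
      cnt N (fun n => v n = true) + cnt N (fun n => u n ≠ v n) := by
  unfold cnt
  calc ((Finset.range N).filter (fun n => u n = true)).card
      ≤ (((Finset.range N).filter (fun n => v n = true)) ∪
          ((Finset.range N).filter (fun n => u n ≠ v n))).card := by
        apply Finset.card_le_card
        intro x hx
        simp only [Finset.mem_filter, Finset.mem_union, Finset.mem_range] at hx ⊢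
        rcases hx with ⟨hxN, hu⟩
        by_cases hv : v x = true
        · exact Or.inl ⟨hxN, hv⟩
        · exact Or.inr ⟨hxN, by simp [hu, hv]⟩
    _ ≤ _ := Finset.card_union_le _ _

lemma bgate_ne_F {x y : Sig4} (h : bgate x y ≠ Sig4.F) :
    x ≠ Sig4.F ∧ y ≠ Sig4.F := by
  cases x <;> cases y <;> simp [bgate] at h ⊢

/-- Every level-`k` subtree of an `F`-free evaluation is `F`-free. -/
lemma subtree_ne_F (k : ℕ) : ∀ (m : ℕ) (a : ℕ → Bool), balEval (k + m) a ≠ Sig4.F →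
    ∀ i < 2 ^ m, balEval k (fun j => a (i * 2 ^ k + j)) ≠ Sig4.F := by
  intro m
  induction m with
  | zero =>
      intro a ha i hi
      interval_cases i
      simpa using ha
  | succ m ih =>
      intro a ha i hi
      have ha' : bgate (balEval (k + m) a)
          (balEval (k + m) (fun t => a (t + 2 ^ (k + m)))) ≠ Sig4.F := by
        simpa [balEval, show k + (m + 1) = (k + m) + 1 from rfl] using ha
      obtain ⟨hL, hR⟩ := bgate_ne_F ha'
      by_cases hi' : i < 2 ^ m
      · exact ih a hL i hi'
      · have h1 : i - 2 ^ m < 2 ^ m := by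
          have : (2:ℕ) ^ (m + 1) = 2 ^ m + 2 ^ m := by ring
          omega
        have hmain := ih (fun t => a (t + 2 ^ (k + m))) hR (i - 2 ^ m) h1
        have heq : (fun j => (fun t => a (t + 2 ^ (k + m))) ((i - 2 ^ m) * 2 ^ k + j))
            = fun j => a (i * 2 ^ k + j) := by
          funext j
          show a ((i - 2 ^ m) * 2 ^ k + j + 2 ^ (k + m)) = a (i * 2 ^ k + j)
          congr 1
          have h3 : i * 2 ^ k = (i - 2 ^ m) * 2 ^ k + 2 ^ m * 2 ^ k := by
            rw [← Nat.add_mul]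
            congr 1
            omega
          have h4 : 2 ^ m * 2 ^ k = 2 ^ (k + m) := by
            rw [← pow_add]
            congr 1
            omega
          rw [h4] at h3
          omega
        rw [heq] at hmain
        exact hmain

/-- The number of `1`s determined by the evaluated symbol. -/
lemma balEval_ones : ∀ (m : ℕ) (a : ℕ → Bool),
    (balEval m a = Sig4.zero ∧ cnt (2 ^ m) (fun j => a j = true) = 0) ∨
    (balEval m a = Sig4.one ∧ cnt (2 ^ m) (fun j => a j = true) = 2 ^ m) ∨
    (balEval m a = Sig4.P ∧ 2 * cnt (2 ^ m) (fun j => a j = true) = 2 ^ m) ∨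
    balEval m a = Sig4.F := by
  intro m
  induction m with
  | zero =>
      intro a
      cases h0 : a 0
      · left
        simp [balEval, h0, cnt, Finset.range_one, Finset.filter_singleton]
      · right; left
        simp [balEval, h0, cnt, Finset.range_one, Finset.filter_singleton]
  | succ m ih =>
      intro a
      have hsplit : cnt (2 ^ (m + 1)) (fun j => a j = true) =
          cnt (2 ^ m) (fun j => a j = true) +
          cnt (2 ^ m) (fun j => a (j + 2 ^ m) = true) := by
        rw [show (2:ℕ) ^ (m + 1) = 2 ^ m + 2 ^ m from by ring, cnt_add]
      have hpow : (2:ℕ) ^ (m + 1) = 2 ^ m + 2 ^ m := by ring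
      have hdef : balEval (m + 1) a
          = bgate (balEval m a) (balEval m (fun t => a (t + 2 ^ m))) := rfl
      rcases ih a with ⟨hL, eL⟩ | ⟨hL, eL⟩ | ⟨hL, eL⟩ | hL <;>
        rcases ih (fun t => a (t + 2 ^ m)) with ⟨hR, eR⟩ | ⟨hR, eR⟩ | ⟨hR, eR⟩ | hR <;>
          rw [hdef, hL, hR] <;> simp [bgate] <;> rw [hsplit] <;> omega

/-- The number of `1`s in a block made of 4 constant quarters. -/
lemma quarters_ones (w : ℕ → Bool) (s : ℕ) (hs : 0 < s) :
    cnt (4 * s) (fun r => w (r / s) = true) =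
      ((Finset.range 4).filter (fun j => w j = true)).card * s := by
  rw [cnt_mul]
  have key : ∀ i ∈ Finset.range 4, cnt s (fun r => w ((i * s + r) / s) = true)
      = if w i = true then s else 0 := by
    intro i _
    rw [cnt_congr (q := fun _ => w i = true) ?_, cnt_const]
    intro n hn
    rw [Nat.mul_comm, Nat.mul_add_div hs, Nat.div_eq_of_lt hn, Nat.add_zero]
  rw [Finset.sum_congr rfl key, ← Finset.sum_filter, Finset.sum_const, smul_eq_mul]

/-- every input produced by the distribution `D_N` (for any
choice of the level `k` and of the quadruple patterns `z i`, each having exactly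
one or exactly three `1`s) is `1/4`-far from satisfying the balancing formula of
height `h`: every accepted assignment differs from it on at least a `1/4`
fraction of the `2^h` variables. -/
theorem DN_far (h k : ℕ) (hk2 : 2 ≤ k) (hkh : k ≤ h) (z : ℕ → ℕ → Bool)
    (hz : ∀ i < 2 ^ (h - k),
      ((Finset.range 4).filter (fun j => z i j = true)).card = 1 ∨
      ((Finset.range 4).filter (fun j => z i j = true)).card = 3) :
    ∀ a' : ℕ → Bool, balEval h a' ≠ Sig4.F →
      (1 / 4 : ℝ) ≤
        (((Finset.range (2 ^ h)).filter
            (fun n => z (n / 2 ^ k) (n % 2 ^ k / 2 ^ (k - 2)) ≠ a' n)).card : ℝ)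
          / (2 ^ h : ℝ) := by
  intro a' ha'
  set p : ℕ → Prop := fun n => z (n / 2 ^ k) (n % 2 ^ k / 2 ^ (k - 2)) ≠ a' n with hp
  set s : ℕ := 2 ^ (k - 2) with hsdef
  have hs : 0 < s := Nat.pow_pos (by norm_num)
  have hks : 2 ^ k = 4 * s := by
    rw [hsdef, show (4:ℕ) = 2 ^ 2 from rfl, ← pow_add]
    congr 1
    omega
  have hhk : 2 ^ h = 2 ^ (h - k) * 2 ^ k := by
    rw [← pow_add]
    congr 1
    omega
  -- per-block lower bound
  have hblock : ∀ i < 2 ^ (h - k), s ≤ cnt (2 ^ k) (fun r => p (i * 2 ^ k + r)) := by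
    intro i hi
    -- rewrite block predicate
    have hre : cnt (2 ^ k) (fun r => p (i * 2 ^ k + r)) =
        cnt (2 ^ k) (fun r => z i (r / s) ≠ a' (i * 2 ^ k + r)) := by
      apply cnt_congr
      intro n hn
      have hdiv : (i * 2 ^ k + n) / 2 ^ k = i := by
        rw [Nat.mul_comm, Nat.mul_add_div (Nat.pow_pos (by norm_num)),
          Nat.div_eq_of_lt hn, Nat.add_zero]
      have hmod : (i * 2 ^ k + n) % 2 ^ k = n := by
        rw [Nat.mul_comm, Nat.mul_add_mod, Nat.mod_eq_of_lt hn]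
      rw [hp]
      simp only [hdiv, hmod, hsdef]
    rw [hre]
    -- ones of the z-part
    have hy : cnt (2 ^ k) (fun r => z i (r / s) = true) =
        ((Finset.range 4).filter (fun j => z i j = true)).card * s := by
      rw [hks]; exact quarters_ones (z i) s hs
    have hc13 := hz i hi
    -- ones of the a'-part
    have hsub : balEval k (fun j => a' (i * 2 ^ k + j)) ≠ Sig4.F := by
      exact subtree_ne_F k (h - k) a' (by
        rwa [show k + (h - k) = h from by omega]) i hi
    have hxvals : cnt (2 ^ k) (fun r => a' (i * 2 ^ k + r) = true) = 0 ∨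
        cnt (2 ^ k) (fun r => a' (i * 2 ^ k + r) = true) = 4 * s ∨
        2 * cnt (2 ^ k) (fun r => a' (i * 2 ^ k + r) = true) = 4 * s := by
      rcases balEval_ones k (fun j => a' (i * 2 ^ k + j)) with
        ⟨hv, hxv⟩ | ⟨hv, hxv⟩ | ⟨hv, hxv⟩ | hv
      · left; exact hxv
      · right; left; rw [← hks]; exact hxv
      · right; right; rw [← hks]; exact hxv
      · exact absurd hv hsub
    -- Hamming distance bounds
    have hd1 := cnt_true_le (2 ^ k) (fun r => z i (r / s)) (fun r => a' (i * 2 ^ k + r))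
    have hd2 := cnt_true_le (2 ^ k) (fun r => a' (i * 2 ^ k + r)) (fun r => z i (r / s))
    try simp only [] at hd1 hd2
    have hne : cnt (2 ^ k) (fun r => a' (i * 2 ^ k + r) ≠ z i (r / s)) =
        cnt (2 ^ k) (fun r => z i (r / s) ≠ a' (i * 2 ^ k + r)) := by
      apply cnt_congr; intro n _; exact ne_comm
    rw [hy] at hd1 hd2
    rw [hne] at hd2
    rcases hc13 with h1 | h1 <;> rw [h1] at hd1 hd2 <;> omega
  -- sum up over blocks
  have htot : 2 ^ (h - k) * s ≤ cnt (2 ^ h) p := by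
    rw [hhk, cnt_mul]
    calc 2 ^ (h - k) * s = ∑ _i ∈ Finset.range (2 ^ (h - k)), s := by
          rw [Finset.sum_const, Finset.card_range, smul_eq_mul]
      _ ≤ _ := Finset.sum_le_sum (fun i hi => hblock i (Finset.mem_range.mp hi))
  have hfinal : 2 ^ h ≤ 4 * cnt (2 ^ h) p := by
    have h2 : 2 ^ (h - k) * s = 2 ^ (h - 2) := by
      rw [hsdef, ← pow_add]; congr 1; omega
    have h3 : (2:ℕ) ^ h = 4 * 2 ^ (h - 2) := by
      rw [show (4:ℕ) = 2 ^ 2 from rfl, ← pow_add]; congr 1; omega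
    omega
  have hcard : cnt (2 ^ h) p = ((Finset.range (2 ^ h)).filter
      (fun n => z (n / 2 ^ k) (n % 2 ^ k / 2 ^ (k - 2)) ≠ a' n)).card := rfl
  rw [← hcard]
  have hpos : (0:ℝ) < (2 ^ h : ℝ) := by positivity
  rw [le_div_iff₀ hpos]
  have hR : ((2:ℝ) ^ h) ≤ 4 * (cnt (2 ^ h) p : ℝ) := by
    exact_mod_cast hfinal
  linarith
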